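/- Let G be a finite solvable group and H a subgroup of G. Then H is abnormal in G if and only if every subgroup S with H ≤ S ≤ G satisfies N_G(S) = S. -/

import Mathlib

/-- The conjugate subgroup `H^g = g⁻¹Hg`. -/
def conjSub {G : Type*} [Group G] (g : G) (H : Subgroup G) : Subgroup G :=
  H.map (MulAut.conj g⁻¹).toMonoidHom

/-- `H` is abnormal in `G`: `g ∈ ⟨H, H^g⟩` for every `g ∈ G`. -/
def IsAbnormal {G : Type*} [Group G] (H : Subgroup G) : Prop :=
  ∀ g : G, g ∈ H ⊔ conjSub g H

/-- `H` is abnormal in the subgroup `B`: `H ≤ B` and `g ∈ ⟨H, H^g⟩` for every `g ∈ B`. -/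
def IsAbnormalIn {G : Type*} [Group G] (H B : Subgroup G) : Prop :=
  H ≤ B ∧ ∀ g ∈ B, g ∈ H ⊔ conjSub g H

open scoped commutatorElement

theorem taunt_criterion_finite_solvable {G : Type*} [Group G] [Finite G]
    [Group.IsSolvable G] (H : Subgroup G) :
    IsAbnormal H ↔ ∀ S : Subgroup G, H ≤ S → Subgroup.normalizer (S : Set G) = S := by
  constructor
  · -- forward: abnormal → every intermediate subgroup is self-normalizing
    intro hab S hHS
    refine le_antisymm ?_ Subgroup.le_normalizer
    intro g hg
    have hinv : g⁻¹ ∈ Subgroup.normalizer (S : Set G) := (Subgroup.normalizer (S : Set G)).inv_mem hg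
    rw [Subgroup.mem_normalizer_iff] at hinv
    refine SetLike.le_def.mp (sup_le hHS ?_) (hab g)
    rintro x ⟨h, hh, rfl⟩
    have := (hinv h).mp (hHS hh)
    simpa [MulAut.conj_apply] using this
  · -- backward
    intro hself g
    set K : Subgroup G := H ⊔ conjSub g H with hKdef
    have hHK : H ≤ K := le_sup_left
    suffices h : ∀ i, g ∈ K ⊔ derivedSeries G i by
      obtain ⟨m, hm⟩ := Group.IsSolvable.solvable (G := G)
      have := h m
      rwa [hm, sup_bot_eq] at this
    intro i
    induction i with
    | zero =>
      simp [derivedSeries_zero]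
    | succ i ih =>
      set A : Subgroup G := derivedSeries G i with hAdef
      have hAnorm : A.Normal := derivedSeries_normal G i
      set A' : Subgroup G := derivedSeries G (i + 1) with hA'def
      have hA'norm : A'.Normal := derivedSeries_normal G (i + 1)
      have hA'comm : ∀ a b : G, a ∈ A → b ∈ A → ⁅a, b⁆ ∈ A' := by
        intro a b ha hb
        rw [hA'def, derivedSeries_succ]
        exact Subgroup.commutator_mem_commutator ha hb
      -- decompose g = n * k with n ∈ A, k ∈ K
      have hgmem : g ∈ (↑(A ⊔ K) : Set G) := by
        rw [SetLike.mem_coe, sup_comm]; exact ih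
      rw [Subgroup.normal_mul] at hgmem
      obtain ⟨n, hnA, k, hkK, hg⟩ := hgmem
      -- n⁻¹ * x * n ∈ K for x ∈ H
      have hn1 : ∀ x ∈ H, n⁻¹ * x * n ∈ K := by
        intro x hx
        have h1 : g⁻¹ * x * g ∈ K := by
          have : (MulAut.conj g⁻¹).toMonoidHom x ∈ conjSub g H :=
            Subgroup.mem_map_of_mem _ hx
          have h2 : conjSub g H ≤ K := le_sup_right
          have h3 := h2 this
          simpa [MulAut.conj_apply, mul_assoc] using h3
        have heq : n⁻¹ * x * n = k * (g⁻¹ * x * g) * k⁻¹ := by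
          rw [← hg]; group
        rw [heq]
        exact K.mul_mem (K.mul_mem hkK h1) (K.inv_mem hkK)
      -- the auxiliary subgroups
      set C : Subgroup G := K ⊓ A with hCdef
      set D : Subgroup G := C ⊔ A' with hDdef
      set M : Subgroup G := H ⊔ D with hMdef
      set φ : MulAut G := MulAut.conj n⁻¹ with hφdef
      have hHM : H ≤ M := le_sup_left
      have hDM : D ≤ M := le_sup_right
      -- conjugation by n⁻¹ maps M into M
      have mapH : H.map φ.toMonoidHom ≤ M := by
        rintro _ ⟨x, hx, rfl⟩
        have hc : x⁻¹ * n⁻¹ * x * n ∈ C := by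
          constructor
          · have : x⁻¹ * (n⁻¹ * x * n) ∈ K :=
              K.mul_mem (K.inv_mem (hHK hx)) (hn1 x hx)
            simpa [mul_assoc] using this
          · have h4 : x⁻¹ * n⁻¹ * (x⁻¹)⁻¹ ∈ A := hAnorm.conj_mem _ (A.inv_mem hnA) _
            have : (x⁻¹ * n⁻¹ * (x⁻¹)⁻¹) * n ∈ A := A.mul_mem h4 hnA
            simpa [mul_assoc] using this
        have hmem : x * (x⁻¹ * n⁻¹ * x * n) ∈ M :=
          M.mul_mem (hHM hx) (hDM (le_sup_left (α := Subgroup G) hc))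
        have heq : φ.toMonoidHom x = x * (x⁻¹ * n⁻¹ * x * n) := by
          simp [hφdef, MulAut.conj_apply]; group
        rw [heq]; exact hmem
      have mapC : C.map φ.toMonoidHom ≤ M := by
        rintro _ ⟨y, hy, rfl⟩
        have hyA : y ∈ A := hy.2
        have hcomm : ⁅y⁻¹, n⁻¹⁆ ∈ A' := hA'comm _ _ (A.inv_mem hyA) (A.inv_mem hnA)
        have hmem : y * ⁅y⁻¹, n⁻¹⁆ ∈ M :=
          M.mul_mem (hDM (le_sup_left (α := Subgroup G) hy))
            (hDM (le_sup_right (α := Subgroup G) hcomm))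
        have heq : φ.toMonoidHom y = y * ⁅y⁻¹, n⁻¹⁆ := by
          simp [hφdef, MulAut.conj_apply, commutatorElement_def]; group
        rw [heq]; exact hmem
      have mapA' : A'.map φ.toMonoidHom ≤ M := by
        rintro _ ⟨z, hz, rfl⟩
        have : φ.toMonoidHom z ∈ A' := by
          simpa [hφdef, MulAut.conj_apply] using hA'norm.conj_mem z hz n⁻¹
        exact hDM (le_sup_right (α := Subgroup G) this)
      have claim_map : M.map φ.toMonoidHom ≤ M := by
        rw [hMdef, hDdef, Subgroup.map_sup, Subgroup.map_sup]
        exact sup_le mapH (sup_le mapC mapA')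
      have map_eq : M.map φ.toMonoidHom = M := by
        refine Subgroup.eq_of_le_of_card_ge claim_map ?_
        exact le_of_eq (Nat.card_congr (φ.subgroupMap M).toEquiv)
      -- hence n⁻¹ normalizes M
      have hn_normalizer : n⁻¹ ∈ Subgroup.normalizer (M : Set G) := by
        rw [Subgroup.mem_normalizer_iff]
        intro x
        constructor
        · intro hx
          have : φ.toMonoidHom x ∈ M := claim_map (Subgroup.mem_map_of_mem _ hx)
          simpa [hφdef, MulAut.conj_apply] using this
        · intro hx
          have hx' : φ.toMonoidHom x ∈ M.map φ.toMonoidHom := by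
            rw [map_eq]
            simpa [hφdef, MulAut.conj_apply] using hx
          obtain ⟨y, hy, hyx⟩ := hx'
          have : y = x := φ.injective hyx
          rwa [← this]
      have hnM : n ∈ M := by
        have := (hself M hHM) ▸ hn_normalizer
        exact (M.inv_mem_iff).mp this
      -- conclude
      have hMle : M ≤ K ⊔ A' := by
        refine sup_le (le_trans hHK le_sup_left) (sup_le ?_ le_sup_right)
        exact le_trans inf_le_left le_sup_left
      have : n * k ∈ K ⊔ A' :=
        (K ⊔ A').mul_mem (hMle hnM) (le_sup_left (α := Subgroup G) hkK)
      have hg' : n * k = g := hg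
      rwa [hg'] at this
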